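/- Under the boundary-case, variance, and integrability assumptions, the triple (n^{1/2} W_n, Z_n, M_n − (3/2)·log n) converges jointly in law as n → ∞ to (√(2/(π σ²)) Z_∞, Z_∞, W), where P(W ≥ x | Z_∞) = exp(−c_* Z_∞ e^x) and c_* is the constant from Aïdékon's convergence in law of M_n − (3/2)·log n. (This follows from the joint convergence of (Z_n, M_n − (3/2)·log n), the convergence in probability n^{1/2} W_n → √(2/(π σ²)) Z_∞, and Slutsky's lemma.) -/

import Mathlib

open MeasureTheory ProbabilityTheory Filter Topology
open scoped ENNReal NNReal

/-!
A branching random walk on `ℝ`, encoded on Ulam–Harris labels (`List ℕ`):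
`T ω` is the genealogical tree, `V ω u` the position of individual `u`,
`u.length` its generation. The structure bundles the boundary case
assumptions, the variance assumption, the integrability assumption, the
non-lattice assumption, and the branching property (conditionally on the
σ-algebra `F n` of the first `n` generations, the processes generated
by the individuals of generation `n`, shifted to their birth positions,
are i.i.d. copies of the whole branching random walk).
-/
structure BRW where
  /-- the underlying sample space -/
  (Ω : Type)
  [m0 : MeasurableSpace Ω]
  (μ : Measure Ω)
  isProb : IsProbabilityMeasure μ
  /-- the genealogical tree, as a random set of Ulam–Harris labels -/
  T : Ω → Set (List ℕ)
  /-- the positions of the individuals -/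
  V : Ω → List ℕ → ℝ
  root_mem : ∀ ω, [] ∈ T ω
  root_pos : ∀ ω, V ω ([]) = 0
  tree_prefix_closed : ∀ ω, ∀ u v : List ℕ, u <+: v → v ∈ T ω → u ∈ T ω
  meas_T : ∀ u : List ℕ, MeasurableSet {ω | u ∈ T ω}
  meas_V : ∀ u : List ℕ, Measurable fun ω => V ω u
  /-- the natural filtration `F n = σ(u, V(u), |u| ≤ n)` -/
  F : MeasureTheory.Filtration ℕ m0
  F_meas_T : ∀ (n : ℕ) (u : List ℕ), u.length ≤ n → MeasurableSet[F n] {ω | u ∈ T ω}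
  F_meas_V : ∀ (n : ℕ) (u : List ℕ), u.length ≤ n → Measurable[F n] fun ω => V ω u
  /-- supercriticality: `E[∑_{|u|=1} 1] > 1` -/
  supercritical :
    1 < ∫⁻ ω, (∑' i : ℕ, Set.indicator {ω' | [i] ∈ T ω'} (fun _ => (1 : ℝ≥0∞)) ω) ∂μ
  /-- boundary case: `E[∑_{|u|=1} e^{-V(u)}] = 1` -/
  mean_one :
    ∫⁻ ω, (∑' i : ℕ, Set.indicator {ω' | [i] ∈ T ω'}
      (fun ω' => ENNReal.ofReal (Real.exp (-(V ω' ([i]))))) ω) ∂μ = 1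
  int_VexpV : Integrable (fun ω => ∑' i : ℕ, Set.indicator {ω' | [i] ∈ T ω'}
      (fun ω' => V ω' ([i]) * Real.exp (-(V ω' ([i])))) ω) μ
  /-- boundary case: `E[∑_{|u|=1} V(u) e^{-V(u)}] = 0` -/
  mean_zero :
    ∫ ω, (∑' i : ℕ, Set.indicator {ω' | [i] ∈ T ω'}
      (fun ω' => V ω' ([i]) * Real.exp (-(V ω' ([i])))) ω) ∂μ = 0
  /-- `σ² = E[∑_{|u|=1} V(u)² e^{-V(u)}]`, finite by the equality with `ENNReal.ofReal` -/
  σ2 : ℝ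
  variance_eq :
    ENNReal.ofReal σ2 = ∫⁻ ω, (∑' i : ℕ, Set.indicator {ω' | [i] ∈ T ω'}
      (fun ω' => ENNReal.ofReal ((V ω' ([i])) ^ 2 * Real.exp (-(V ω' ([i]))))) ω) ∂μ
  variance_pos : 0 < σ2
  /-- `E[∑_{|u|=1} e^{-V(u)} (log₊ ∑_{|u|=1} (1+V(u)₊) e^{-V(u)})²] < ∞` -/
  integrability :
    ∫⁻ ω, ENNReal.ofReal
      ((∑' i : ℕ, Set.indicator {ω' | [i] ∈ T ω'}
          (fun ω' => Real.exp (-(V ω' ([i])))) ω) *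
        (max (Real.log (∑' i : ℕ, Set.indicator {ω' | [i] ∈ T ω'}
          (fun ω' => (1 + max (V ω' ([i])) 0) * Real.exp (-(V ω' ([i])))) ω)) 0) ^ 2) ∂μ < ⊤
  /-- the displacement law is non-lattice -/
  nonlattice : ∀ a d : ℝ, 0 < d →
    ¬ (∀ᵐ ω ∂μ, ∀ i : ℕ, [i] ∈ T ω → ∃ k : ℤ, V ω ([i]) = a + k * d)
  /-- branching property: given `F n`, the shifted subtrees rooted at the individuals of
  generation `n` are i.i.d. copies of the whole branching random walk. A subtree rooted at `u`
  is encoded by the pair (membership predicate of the shifted tree, shifted positions). -/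
  branching : ∀ (n : ℕ) (us : Finset (List ℕ)), (∀ u ∈ us, u.length = n) →
    ∀ A : Set Ω, MeasurableSet[F n] A → (∀ ω ∈ A, ∀ u ∈ us, u ∈ T ω) →
    ∀ g : List ℕ → Set ((List ℕ → Prop) × (List ℕ → ℝ)),
      (∀ u ∈ us, MeasurableSet (g u)) →
      μ (A ∩ ⋂ u ∈ us, {ω | ((fun v => u ++ v ∈ T ω), fun v => V ω (u ++ v) - V ω u) ∈ g u})
        = μ A * ∏ u ∈ us, μ {ω | ((fun v => v ∈ T ω), V ω) ∈ g u}

attribute [instance] BRW.m0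

namespace BRW

variable (B : BRW)

/-- `M n`, the minimal position at generation `n`. -/
noncomputable def M (n : ℕ) (ω : B.Ω) : ℝ :=
  sInf {x | ∃ u ∈ B.T ω, u.length = n ∧ B.V ω u = x}

/-- `R n`, the minimal position attained after time `n`. -/
noncomputable def R (n : ℕ) (ω : B.Ω) : ℝ :=
  sInf {x | ∃ u ∈ B.T ω, n ≤ u.length ∧ B.V ω u = x}

/-- the additive martingale `W n = ∑_{|u|=n} e^{-V(u)}`. -/
noncomputable def W (n : ℕ) (ω : B.Ω) : ℝ :=
  ∑' u : List ℕ, Set.indicator {u : List ℕ | u.length = n ∧ u ∈ B.T ω}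
    (fun u => Real.exp (-(B.V ω u))) u

/-- the derivative martingale `Z n = ∑_{|u|=n} V(u) e^{-V(u)}`. -/
noncomputable def Z (n : ℕ) (ω : B.Ω) : ℝ :=
  ∑' u : List ℕ, Set.indicator {u : List ℕ | u.length = n ∧ u ∈ B.T ω}
    (fun u => B.V ω u * Real.exp (-(B.V ω u))) u

/-- `Zinf` is the a.s. limit `Z_∞` of the derivative martingale. -/
def IsDerivativeMartingaleLimit (Zinf : B.Ω → ℝ) : Prop :=
  Measurable Zinf ∧ ∀ᵐ ω ∂B.μ, Tendsto (fun n => B.Z n ω) atTop (𝓝 (Zinf ω))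

/-- `c_M` is the constant from Madaule's tail estimate `lim_{x→∞} e^x P(R_0 ≤ -x) = c_M`. -/
def IsMadauleConstant (cM : ℝ) : Prop :=
  0 < cM ∧
    Tendsto (fun x : ℝ => Real.exp x * (B.μ {ω | B.R 0 ω ≤ -x}).toReal) atTop (𝓝 cM)

end BRW

/-- convergence in law (in distribution) of `E`-valued random variables, stated by testing
against bounded continuous functions. -/
def ConvInLaw {Ω Ω' E : Type*} [MeasurableSpace Ω] [MeasurableSpace Ω'] [TopologicalSpace E]
    (μ : Measure Ω) (μ' : Measure Ω') (X : ℕ → Ω → E) (Y : Ω' → E) : Prop :=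
  ∀ f : BoundedContinuousFunction E ℝ,
    Tendsto (fun n => ∫ ω, f (X n ω) ∂μ) atTop (𝓝 (∫ ω, f (Y ω) ∂μ'))

/-- `c_*` is the constant from Aïdékon's theorem: `(Z_n, M_n - (3/2) log n)` converges in law
to a pair `(Z', W')` where `Z'` has the law of `Z_∞` and
`P(W' ≥ x | Z') = exp (-c_* Z' e^x)`. -/
def BRW.IsAidekonConstant (B : BRW) (Zinf : B.Ω → ℝ) (cstar : ℝ) : Prop :=
  ∃ (Ω' : Type) (m' : MeasurableSpace Ω') (μ' : @Measure Ω' m') (Z' W' : Ω' → ℝ),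
    @IsProbabilityMeasure Ω' m' μ' ∧ @Measurable Ω' ℝ m' _ Z' ∧ @Measurable Ω' ℝ m' _ W' ∧
    @Measure.map Ω' ℝ m' _ Z' μ' = Measure.map Zinf B.μ ∧
    (∀ x : ℝ,
      (MeasureTheory.condExp (m₀ := m') (MeasurableSpace.comap Z' Real.measurableSpace) μ'
          (Set.indicator {ω' | x ≤ W' ω'} (fun _ => (1 : ℝ))))
        =ᵐ[μ'] fun ω' => Real.exp (-(cstar * Z' ω' * Real.exp x))) ∧
    @ConvInLaw B.Ω Ω' (ℝ × ℝ) _ m' _ B.μ μ'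
      (fun n ω => (B.Z n ω, B.M n ω - (3 / 2) * Real.log n)) (fun ω' => (Z' ω', W' ω'))

/-- a random vector `(Z', W', L')` on some probability space, used to describe limits in law. -/
structure RandomTriple where
  (Ω' : Type)
  [m' : MeasurableSpace Ω']
  (μ' : Measure Ω')
  isProb : IsProbabilityMeasure μ'
  (Z' : Ω' → ℝ)
  (W' : Ω' → ℝ)
  (L' : Ω' → ℝ)
  meas_Z : Measurable Z'
  meas_W : Measurable W'
  meas_L : Measurable L'

attribute [instance] RandomTriple.m'

/-- a real random variable on some probability space, used to describe limits in law. -/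
structure RandomVar where
  (Ω' : Type)
  [m' : MeasurableSpace Ω']
  (μ' : Measure Ω')
  isProb : IsProbabilityMeasure μ'
  (X' : Ω' → ℝ)
  meas_X : Measurable X'

attribute [instance] RandomVar.m'

section AuxLemmas

lemma measurable_tsum_nat {Ω : Type*} [MeasurableSpace Ω] {f : ℕ → Ω → ℝ}
    (hf : ∀ n, Measurable (f n)) : Measurable fun ω => ∑' n, f n ω := by
  classical
  set T : Finset ℕ → Ω → ℝ := fun s ω => ∑ i ∈ s, f i ω with hT
  have hTmeas : ∀ s, Measurable (T s) := fun s => Finset.measurable_sum _ (fun i _ => hf i)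
  set Summ : Set Ω := {ω | Summable fun n => f n ω} with hSummdef
  have hSumm : MeasurableSet Summ := by
    have heq : Summ = ⋂ (k : ℕ), ⋃ (N : Finset ℕ), ⋂ (s : Finset ℕ), ⋂ (t : Finset ℕ),
        {ω | N ≤ s → N ≤ t → dist (T s ω) (T t ω) < 1 / (k + 1)} := by
      ext ω
      simp only [hSummdef, Set.mem_setOf_eq, Set.mem_iInter, Set.mem_iUnion]
      rw [summable_iff_cauchySeq_finset, Metric.cauchySeq_iff]
      constructor
      · intro h k
        obtain ⟨N, hN⟩ := h (1 / (k + 1)) (by positivity)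
        exact ⟨N, fun s t hs ht => hN s hs t ht⟩
      · intro h ε hε
        obtain ⟨k, hk⟩ := exists_nat_one_div_lt hε
        obtain ⟨N, hN⟩ := h k
        exact ⟨N, fun s hs t ht => (hN s t hs ht).trans hk⟩
    rw [heq]
    refine MeasurableSet.iInter fun k => MeasurableSet.iUnion fun N =>
      MeasurableSet.iInter fun s => MeasurableSet.iInter fun t => ?_
    by_cases hs : N ≤ s
    · by_cases ht : N ≤ t
      · have : {ω | N ≤ s → N ≤ t → dist (T s ω) (T t ω) < 1 / (k + 1)}
            = {ω | dist (T s ω) (T t ω) < 1 / (k + 1)} := by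
          ext ω; simp [hs, ht]
        rw [this]
        exact measurableSet_lt ((hTmeas s).dist (hTmeas t)) measurable_const
      · have : {ω | N ≤ s → N ≤ t → dist (T s ω) (T t ω) < 1 / (k + 1)} = Set.univ := by
          ext ω; simp [ht]
        rw [this]; exact MeasurableSet.univ
    · have : {ω | N ≤ s → N ≤ t → dist (T s ω) (T t ω) < 1 / (k + 1)} = Set.univ := by
        ext ω; simp [hs]
      rw [this]; exact MeasurableSet.univ
  have key : (fun ω => ∑' n, f n ω)
      = Summ.indicator (fun ω => limsup (fun N => T (Finset.range N) ω) atTop) := by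
    ext ω
    by_cases h : ω ∈ Summ
    · rw [Set.indicator_of_mem h]
      have h' : Summable fun n => f n ω := h
      exact (h'.hasSum.tendsto_sum_nat.limsup_eq).symm
    · rw [Set.indicator_of_notMem h]
      exact tsum_eq_zero_of_not_summable h
  rw [key]
  exact (Measurable.limsup fun N => hTmeas (Finset.range N)).indicator hSumm

lemma measurable_tsum_denum {ι Ω : Type*} [MeasurableSpace Ω] [Encodable ι] [Infinite ι]
    {f : ι → Ω → ℝ} (hf : ∀ i, Measurable (f i)) : Measurable fun ω => ∑' i, f i ω := by
  haveI : Denumerable ι := Denumerable.ofEncodableOfInfinite ι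
  have e : ι ≃ ℕ := Denumerable.eqv ι
  have heq : (fun ω => ∑' i, f i ω) = fun ω => ∑' n, f (e.symm n) ω := by
    ext ω; exact (e.symm.tsum_eq (f · ω)).symm
  rw [heq]
  exact measurable_tsum_nat fun n => hf _

variable {Ωa Ωb : Type*} [MeasurableSpace Ωa] [MeasurableSpace Ωb]

lemma slutsky (μ : Measure Ωa) (μ' : Measure Ωb)
    [IsProbabilityMeasure μ] [IsProbabilityMeasure μ']
    (X A : ℕ → Ωa → ℝ × ℝ × ℝ) (Y : Ωb → ℝ × ℝ × ℝ)
    (hX : ∀ n, Measurable (X n)) (hA : ∀ n, Measurable (A n)) (hY : Measurable Y)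
    (hconv : ConvInLaw μ μ' X Y)
    (hdist : ∀ δ : ℝ, 0 < δ →
      Tendsto (fun n => μ {ω | δ ≤ dist (A n ω) (X n ω)}) atTop (𝓝 0)) :
    ConvInLaw μ μ' A Y := by
  set κ : ℕ → ProbabilityMeasure (ℝ × ℝ × ℝ) := fun n =>
    ⟨μ.map (X n), Measure.isProbabilityMeasure_map (hX n).aemeasurable⟩ with hκ
  set ν : ℕ → ProbabilityMeasure (ℝ × ℝ × ℝ) := fun n =>
    ⟨μ.map (A n), Measure.isProbabilityMeasure_map (hA n).aemeasurable⟩ with hν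
  set P : ProbabilityMeasure (ℝ × ℝ × ℝ) := ⟨μ'.map Y, Measure.isProbabilityMeasure_map hY.aemeasurable⟩ with hP
  have hκP : Tendsto κ atTop (𝓝 P) := by
    rw [ProbabilityMeasure.tendsto_iff_forall_integral_tendsto]
    intro f
    have h1 : ∀ n, ∫ x, f x ∂(κ n : Measure (ℝ × ℝ × ℝ)) = ∫ ω, f (X n ω) ∂μ := fun n =>
      integral_map (hX n).aemeasurable f.continuous.aestronglyMeasurable
    have h2 : ∫ x, f x ∂(P : Measure (ℝ × ℝ × ℝ)) = ∫ ω, f (Y ω) ∂μ' :=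
      integral_map hY.aemeasurable f.continuous.aestronglyMeasurable
    simp only [h1, h2]
    exact hconv f
  have h_opens : ∀ G : Set (ℝ × ℝ × ℝ), IsOpen G →
      (P : Measure (ℝ × ℝ × ℝ)) G ≤ atTop.liminf (fun n => (ν n : Measure (ℝ × ℝ × ℝ)) G) := by
    intro G hG
    set Gd : ℕ → Set (ℝ × ℝ × ℝ) := fun k => {p | ENNReal.ofReal (1 / (k + 1)) < EMetric.infEdist p Gᶜ}
      with hGd
    have hGdopen : ∀ k, IsOpen (Gd k) :=
      fun k => isOpen_lt continuous_const EMetric.continuous_infEdist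
    have key : ∀ k : ℕ, (P : Measure (ℝ × ℝ × ℝ)) (Gd k) ≤
        atTop.liminf (fun n => (ν n : Measure (ℝ × ℝ × ℝ)) G) := by
      intro k
      set δ : ℝ := 1 / (k + 1) with hδ
      have hδpos : 0 < δ := by positivity
      have step1 : (P : Measure (ℝ × ℝ × ℝ)) (Gd k) ≤ atTop.liminf (fun n => (κ n : Measure (ℝ × ℝ × ℝ)) (Gd k)) :=
        ProbabilityMeasure.le_liminf_measure_open_of_tendsto hκP (hGdopen k)
      have incl : ∀ n, (κ n : Measure (ℝ × ℝ × ℝ)) (Gd k) ≤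
          (ν n : Measure (ℝ × ℝ × ℝ)) G + μ {ω | δ ≤ dist (A n ω) (X n ω)} := by
        intro n
        have e1 : (κ n : Measure (ℝ × ℝ × ℝ)) (Gd k) = μ (X n ⁻¹' Gd k) :=
          Measure.map_apply (hX n) (hGdopen k).measurableSet
        have e2 : (ν n : Measure (ℝ × ℝ × ℝ)) G = μ (A n ⁻¹' G) :=
          Measure.map_apply (hA n) hG.measurableSet
        rw [e1, e2]
        refine le_trans (measure_mono ?_) (measure_union_le _ _)
        intro ω hω
        by_cases hd : δ ≤ dist (A n ω) (X n ω)
        · exact Or.inr hd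
        · left
          push_neg at hd
          by_contra hAG
          have hmem : A n ω ∈ Gᶜ := hAG
          have h1 : EMetric.infEdist (X n ω) Gᶜ ≤ edist (X n ω) (A n ω) :=
            EMetric.infEdist_le_edist_of_mem hmem
          have h2 : edist (X n ω) (A n ω) = ENNReal.ofReal (dist (A n ω) (X n ω)) := by
            rw [edist_dist, dist_comm]
          have h3 : ENNReal.ofReal δ < ENNReal.ofReal (dist (A n ω) (X n ω)) :=
            lt_of_lt_of_le hω (h1.trans_eq h2)
          have h4 := (ENNReal.ofReal_lt_ofReal_iff_of_nonneg hδpos.le).mp h3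
          exact absurd h4 (not_lt.mpr hd.le)
      refine le_trans step1 ?_
      refine ENNReal.le_of_forall_pos_le_add fun ε hε _ => ?_
      have hev : ∀ᶠ n in atTop, μ {ω | δ ≤ dist (A n ω) (X n ω)} ≤ (ε : ℝ≥0∞) := by
        have h0 : (0 : ℝ≥0∞) < (ε : ℝ≥0∞) := ENNReal.coe_pos.mpr hε
        exact (hdist δ hδpos).eventually_le_const h0
      have hmono : atTop.liminf (fun n => (κ n : Measure (ℝ × ℝ × ℝ)) (Gd k)) ≤
          atTop.liminf (fun n => (ν n : Measure (ℝ × ℝ × ℝ)) G + (ε : ℝ≥0∞)) := by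
        refine liminf_le_liminf (hev.mono fun n hn => (incl n).trans (add_le_add le_rfl hn))
      rw [liminf_add_const atTop (fun n => (ν n : Measure (ℝ × ℝ × ℝ)) G) (ε : ℝ≥0∞)
        isCobounded_ge_of_top isBounded_ge_of_bot] at hmono
      exact hmono
    have hmono : Monotone Gd := by
      intro k l hkl p hp
      simp only [hGd, Set.mem_setOf_eq] at hp ⊢
      refine lt_of_le_of_lt ?_ hp
      apply ENNReal.ofReal_le_ofReal
      apply one_div_le_one_div_of_le (by positivity)
      exact_mod_cast add_le_add (Nat.cast_le.mpr hkl) (le_refl (1:ℝ))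
    have hGdunion : (⋃ k, Gd k) = G := by
      apply Set.Subset.antisymm
      · refine Set.iUnion_subset fun k p hp => ?_
        by_contra h
        have h0 : EMetric.infEdist p Gᶜ = 0 := EMetric.infEdist_zero_of_mem h
        rw [hGd] at hp
        simp only [Set.mem_setOf_eq, h0] at hp
        exact absurd hp (by simp)
      · intro p hp
        have hpos : 0 < EMetric.infEdist p Gᶜ := by
          refine EMetric.infEdist_pos_iff_notMem_closure.mpr ?_
          rw [hG.isClosed_compl.closure_eq]
          simpa using hp
        obtain ⟨m, hm⟩ := ENNReal.exists_inv_nat_lt hpos.ne'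
        refine Set.mem_iUnion.mpr ⟨m, ?_⟩
        have hle : ENNReal.ofReal (1 / (m + 1)) ≤ (m : ℝ≥0∞)⁻¹ := by
          rw [one_div, ENNReal.ofReal_inv_of_pos (by positivity)]
          refine ENNReal.inv_le_inv.mpr ?_
          rw [← ENNReal.ofReal_natCast m]
          exact ENNReal.ofReal_le_ofReal (by linarith)
        exact lt_of_le_of_lt hle hm
    calc (P : Measure (ℝ × ℝ × ℝ)) G = (P : Measure (ℝ × ℝ × ℝ)) (⋃ k, Gd k) := by rw [hGdunion]
      _ = ⨆ k, (P : Measure (ℝ × ℝ × ℝ)) (Gd k) := hmono.measure_iUnion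
      _ ≤ _ := iSup_le key
  have h_opens' : ∀ G : Set (ℝ × ℝ × ℝ), IsOpen G → P G ≤ atTop.liminf (fun n => ν n G) := by
    intro G hG
    have aux : (ENNReal.ofNNReal (atTop.liminf fun n => ν n G))
        = atTop.liminf (fun n => ((ν n G : ℝ≥0∞))) := by
      refine Monotone.map_liminf_of_continuousAt (F := atTop) ENNReal.coe_mono
        (fun n => ν n G) ENNReal.continuous_coe.continuousAt ?_ ?_
      · exact IsBoundedUnder.isCoboundedUnder_ge ⟨1, Filter.eventually_map.mpr
          (Filter.Eventually.of_forall fun n => ProbabilityMeasure.apply_le_one _ _)⟩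
      · exact ⟨0, Filter.eventually_map.mpr (Filter.Eventually.of_forall fun n => zero_le)⟩
    rw [← ENNReal.coe_le_coe, aux]
    simpa only [ProbabilityMeasure.ennreal_coeFn_eq_coeFn_toMeasure] using h_opens G hG
  have hνP : Tendsto ν atTop (𝓝 P) := tendsto_of_forall_isOpen_le_liminf h_opens'
  intro f
  have h := ProbabilityMeasure.tendsto_iff_forall_integral_tendsto.mp hνP f
  have h1 : ∀ n, ∫ x, f x ∂(ν n : Measure (ℝ × ℝ × ℝ)) = ∫ ω, f (A n ω) ∂μ := fun n =>
    integral_map (hA n).aemeasurable f.continuous.aestronglyMeasurable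
  have h2 : ∫ x, f x ∂(P : Measure (ℝ × ℝ × ℝ)) = ∫ ω, f (Y ω) ∂μ' :=
    integral_map hY.aemeasurable f.continuous.aestronglyMeasurable
  simpa only [h1, h2] using h


lemma BRW.measurable_W (B : BRW) (n : ℕ) : Measurable (B.W n) := by
  refine measurable_tsum_denum fun u => ?_
  have heq : (fun ω => Set.indicator {u' : List ℕ | u'.length = n ∧ u' ∈ B.T ω}
      (fun u' => Real.exp (-(B.V ω u'))) u)
      = Set.indicator {ω : B.Ω | u.length = n ∧ u ∈ B.T ω}
        (fun ω => Real.exp (-(B.V ω u))) := by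
    ext ω
    rfl
  rw [heq]
  have hset : MeasurableSet {ω : B.Ω | u.length = n ∧ u ∈ B.T ω} := by
    by_cases h : u.length = n
    · simp only [h, true_and]
      exact B.meas_T u
    · have : {ω : B.Ω | u.length = n ∧ u ∈ B.T ω} = ∅ := by ext ω; simp [h]
      rw [this]; exact MeasurableSet.empty
  exact ((B.meas_V u).neg.exp).indicator hset

lemma BRW.measurable_Z (B : BRW) (n : ℕ) : Measurable (B.Z n) := by
  refine measurable_tsum_denum fun u => ?_
  have heq : (fun ω => Set.indicator {u' : List ℕ | u'.length = n ∧ u' ∈ B.T ω}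
      (fun u' => B.V ω u' * Real.exp (-(B.V ω u'))) u)
      = Set.indicator {ω : B.Ω | u.length = n ∧ u ∈ B.T ω}
        (fun ω => B.V ω u * Real.exp (-(B.V ω u))) := by
    ext ω
    rfl
  rw [heq]
  have hset : MeasurableSet {ω : B.Ω | u.length = n ∧ u ∈ B.T ω} := by
    by_cases h : u.length = n
    · simp only [h, true_and]
      exact B.meas_T u
    · have : {ω : B.Ω | u.length = n ∧ u ∈ B.T ω} = ∅ := by ext ω; simp [h]
      rw [this]; exact MeasurableSet.empty
  exact ((B.meas_V u).mul ((B.meas_V u).neg.exp)).indicator hset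

lemma BRW.measurable_M (B : BRW) (n : ℕ) : Measurable (B.M n) := by
  apply measurable_of_Iio
  intro t
  set S : B.Ω → Set ℝ := fun ω => {x | ∃ u ∈ B.T ω, u.length = n ∧ B.V ω u = x} with hSdef
  have hM : ∀ ω, B.M n ω = sInf (S ω) := fun ω => rfl
  set NEBB : Set B.Ω := {ω | (∃ u : List ℕ, u ∈ B.T ω ∧ u.length = n) ∧
      ∃ q : ℚ, ∀ u : List ℕ, u ∈ B.T ω → u.length = n → (q : ℝ) ≤ B.V ω u} with hNEBBdef
  have hNE : ∀ ω, ω ∈ NEBB ↔ (S ω).Nonempty ∧ BddBelow (S ω) := by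
    intro ω
    constructor
    · rintro ⟨⟨u, hu, hl⟩, q, hq⟩
      refine ⟨⟨B.V ω u, u, hu, hl, rfl⟩, ⟨(q : ℝ), ?_⟩⟩
      rintro x ⟨v, hv, hlv, rfl⟩
      exact hq v hv hlv
    · rintro ⟨⟨x, u, hu, hl, rfl⟩, b, hb⟩
      refine ⟨⟨u, hu, hl⟩, ?_⟩
      obtain ⟨q, hq⟩ := exists_rat_lt b
      exact ⟨q, fun v hv hlv => hq.le.trans (hb ⟨v, hv, hlv, rfl⟩)⟩
  have h0 : ∀ ω, ω ∉ NEBB → B.M n ω = 0 := by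
    intro ω h
    rw [hM]
    by_cases hne : (S ω).Nonempty
    · have hbb : ¬ BddBelow (S ω) := fun hb => h ((hNE ω).mpr ⟨hne, hb⟩)
      exact Real.sInf_of_not_bddBelow hbb
    · rw [Set.not_nonempty_iff_eq_empty.mp hne]
      exact Real.sInf_empty
  have hkey : B.M n ⁻¹' Set.Iio t =
      (NEBB ∩ ⋃ u : List ℕ, {ω | u ∈ B.T ω ∧ u.length = n ∧ B.V ω u < t})
      ∪ (NEBBᶜ ∩ {ω : B.Ω | (0:ℝ) < t}) := by
    ext ω
    simp only [Set.mem_preimage, Set.mem_Iio, Set.mem_union, Set.mem_inter_iff,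
      Set.mem_iUnion, Set.mem_setOf_eq, Set.mem_compl_iff]
    constructor
    · intro hMlt
      by_cases h : ω ∈ NEBB
      · obtain ⟨hne, hbb⟩ := (hNE ω).mp h
        rw [hM] at hMlt
        obtain ⟨x, ⟨u, hu, hl, rfl⟩, hx⟩ := (csInf_lt_iff hbb hne).mp hMlt
        exact Or.inl ⟨h, u, hu, hl, hx⟩
      · exact Or.inr ⟨h, (h0 ω h) ▸ hMlt⟩
    · rintro (⟨h, u, hu, hl, hV⟩ | ⟨h, ht⟩)
      · obtain ⟨hne, hbb⟩ := (hNE ω).mp h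
        rw [hM]
        exact lt_of_le_of_lt (csInf_le hbb ⟨u, hu, hl, rfl⟩) hV
      · rw [h0 ω h]; exact ht
  rw [hkey]
  have hNEBBmeas : MeasurableSet NEBB := by
    have hNE1 : MeasurableSet {ω : B.Ω | ∃ u : List ℕ, u ∈ B.T ω ∧ u.length = n} := by
      have : {ω : B.Ω | ∃ u : List ℕ, u ∈ B.T ω ∧ u.length = n}
          = ⋃ u : List ℕ, ({ω | u ∈ B.T ω} ∩ {ω | u.length = n}) := by
        ext ω; simp [Set.mem_iUnion]
      rw [this]
      refine MeasurableSet.iUnion fun u => (B.meas_T u).inter ?_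
      exact MeasurableSet.const _
    have hNE2 : MeasurableSet {ω : B.Ω | ∃ q : ℚ, ∀ u : List ℕ,
        u ∈ B.T ω → u.length = n → (q : ℝ) ≤ B.V ω u} := by
      have : {ω : B.Ω | ∃ q : ℚ, ∀ u : List ℕ, u ∈ B.T ω → u.length = n → (q : ℝ) ≤ B.V ω u}
          = ⋃ q : ℚ, ⋂ u : List ℕ, ({ω | u ∈ B.T ω}ᶜ ∪ {ω | u.length = n}ᶜ
            ∪ {ω | (q : ℝ) ≤ B.V ω u}) := by
        ext ω
        simp only [Set.mem_setOf_eq, Set.mem_iUnion, Set.mem_iInter, Set.mem_union,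
          Set.mem_compl_iff]
        constructor
        · rintro ⟨q, hq⟩
          refine ⟨q, fun u => ?_⟩
          by_cases h1 : u ∈ B.T ω
          · by_cases h2 : u.length = n
            · exact Or.inr (hq u h1 h2)
            · exact Or.inl (Or.inr h2)
          · exact Or.inl (Or.inl h1)
        · rintro ⟨q, hq⟩
          refine ⟨q, fun u h1 h2 => ?_⟩
          rcases hq u with ((h | h) | h)
          · exact absurd h1 h
          · exact absurd h2 h
          · exact h
      rw [this]
      refine MeasurableSet.iUnion fun q => MeasurableSet.iInter fun u => ?_
      refine MeasurableSet.union (MeasurableSet.union (B.meas_T u).compl ?_) ?_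
      · exact (MeasurableSet.const _).compl
      · exact measurableSet_le measurable_const (B.meas_V u)
    have hsplit : NEBB = {ω : B.Ω | ∃ u : List ℕ, u ∈ B.T ω ∧ u.length = n}
        ∩ {ω : B.Ω | ∃ q : ℚ, ∀ u : List ℕ, u ∈ B.T ω → u.length = n → (q : ℝ) ≤ B.V ω u} := rfl
    rw [hsplit]
    exact hNE1.inter hNE2
  have hU : MeasurableSet (⋃ u : List ℕ, {ω | u ∈ B.T ω ∧ u.length = n ∧ B.V ω u < t}) := by
    refine MeasurableSet.iUnion fun u => ?_
    have : {ω : B.Ω | u ∈ B.T ω ∧ u.length = n ∧ B.V ω u < t}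
        = {ω | u ∈ B.T ω} ∩ ({ω | u.length = n} ∩ {ω | B.V ω u < t}) := by
      ext ω; simp [and_assoc]
    rw [this]
    exact (B.meas_T u).inter ((MeasurableSet.const _).inter
      (measurableSet_lt (B.meas_V u) measurable_const))
  exact (hNEBBmeas.inter hU).union (hNEBBmeas.compl.inter (MeasurableSet.const _))

end AuxLemmas

/-- joint convergence in law of `(n^{1/2} W_n, Z_n, M_n - (3/2) log n)` to
`(√(2/(π σ²)) Z_∞, Z_∞, W)`, obtained from Aïdékon's theorem, the convergence in
probability `n^{1/2} W_n → √(2/(π σ²)) Z_∞` of Aïdékon–Shi, and Slutsky's lemma. -/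
theorem joint_convergence (B : BRW) (Zinf : B.Ω → ℝ)
    (hZinf : B.IsDerivativeMartingaleLimit Zinf) (cstar : ℝ)
    (Ω' : Type) [MeasurableSpace Ω'] (μ' : Measure Ω') (hprob : IsProbabilityMeasure μ')
    (Z' W' : Ω' → ℝ) (hZ'meas : Measurable Z') (hW'meas : Measurable W')
    (hlaw : Measure.map Z' μ' = Measure.map Zinf B.μ)
    (hcond : ∀ x : ℝ,
      MeasureTheory.condExp (MeasurableSpace.comap Z' Real.measurableSpace) μ'
          (Set.indicator {ω' | x ≤ W' ω'} fun _ => (1 : ℝ))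
        =ᵐ[μ'] fun ω' => Real.exp (-(cstar * Z' ω' * Real.exp x)))
    (hAid : ConvInLaw B.μ μ'
      (fun n ω => (B.Z n ω, B.M n ω - (3 / 2) * Real.log n)) (fun ω' => (Z' ω', W' ω')))
    (hAiS : TendstoInMeasure B.μ (fun (n : ℕ) ω => Real.sqrt n * B.W n ω) atTop
      (fun ω => Real.sqrt (2 / (Real.pi * B.σ2)) * Zinf ω)) :
    ConvInLaw B.μ μ'
      (fun (n : ℕ) ω => (Real.sqrt n * B.W n ω, B.Z n ω, B.M n ω - (3 / 2) * Real.log n))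
      (fun ω' => (Real.sqrt (2 / (Real.pi * B.σ2)) * Z' ω', Z' ω', W' ω')) := by
  haveI := B.isProb
  haveI := hprob
  obtain ⟨hZinfmeas, hZae⟩ := hZinf
  set c : ℝ := Real.sqrt (2 / (Real.pi * B.σ2)) with hc
  set X : ℕ → B.Ω → ℝ × ℝ × ℝ :=
    fun n ω => (c * B.Z n ω, B.Z n ω, B.M n ω - (3 / 2) * Real.log n) with hX
  set A : ℕ → B.Ω → ℝ × ℝ × ℝ :=
    fun n ω => (Real.sqrt n * B.W n ω, B.Z n ω, B.M n ω - (3 / 2) * Real.log n) with hA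
  set Y : Ω' → ℝ × ℝ × ℝ := fun ω' => (c * Z' ω', Z' ω', W' ω') with hY
  have hXmeas : ∀ n, Measurable (X n) := fun n =>
    (measurable_const.mul (B.measurable_Z n)).prodMk
      ((B.measurable_Z n).prodMk ((B.measurable_M n).sub measurable_const))
  have hAmeas : ∀ n, Measurable (A n) := fun n =>
    (measurable_const.mul (B.measurable_W n)).prodMk
      ((B.measurable_Z n).prodMk ((B.measurable_M n).sub measurable_const))
  have hYmeas : Measurable Y :=
    (measurable_const.mul hZ'meas).prodMk (hZ'meas.prodMk hW'meas)
  have hconv : ConvInLaw B.μ μ' X Y := by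
    intro f
    have hg : Continuous (fun p : ℝ × ℝ => ((c * p.1, p.1, p.2) : ℝ × ℝ × ℝ)) := by
      fun_prop
    have := hAid (f.compContinuous ⟨fun p : ℝ × ℝ => ((c * p.1, p.1, p.2) : ℝ × ℝ × ℝ), hg⟩)
    simpa only [BoundedContinuousFunction.coe_compContinuous, ContinuousMap.coe_mk,
      Function.comp_apply] using this
  have hdist : ∀ δ : ℝ, 0 < δ →
      Tendsto (fun n => B.μ {ω | δ ≤ dist (A n ω) (X n ω)}) atTop (𝓝 0) := by
    intro δ hδ
    have hZm : TendstoInMeasure B.μ (fun n ω => c * B.Z n ω) atTop (fun ω => c * Zinf ω) := by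
      refine tendstoInMeasure_of_tendsto_ae
        (fun n => (measurable_const.mul (B.measurable_Z n)).aestronglyMeasurable) ?_
      filter_upwards [hZae] with ω h
      exact h.const_mul c
    have h1 := tendstoInMeasure_iff_dist.mp hAiS (δ / 2) (by positivity)
    have h2 := tendstoInMeasure_iff_dist.mp hZm (δ / 2) (by positivity)
    have hle : ∀ n, B.μ {ω | δ ≤ dist (A n ω) (X n ω)} ≤
        B.μ {ω | δ / 2 ≤ dist (Real.sqrt (n : ℝ) * B.W n ω) (c * Zinf ω)}
        + B.μ {ω | δ / 2 ≤ dist (c * B.Z n ω) (c * Zinf ω)} := by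
      intro n
      refine le_trans (measure_mono ?_) (measure_union_le _ _)
      intro ω hω
      simp only [Set.mem_setOf_eq] at hω
      have hd : dist (A n ω) (X n ω) = dist (Real.sqrt (n : ℝ) * B.W n ω) (c * B.Z n ω) := by
        simp [hA, hX, Prod.dist_eq, dist_self, max_eq_left dist_nonneg]
      rw [hd] at hω
      have htri : dist (Real.sqrt (n : ℝ) * B.W n ω) (c * B.Z n ω) ≤
          dist (Real.sqrt (n : ℝ) * B.W n ω) (c * Zinf ω) + dist (c * B.Z n ω) (c * Zinf ω) := by
        rw [dist_comm (c * B.Z n ω) (c * Zinf ω)]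
        exact dist_triangle _ _ _
      by_contra hcon
      simp only [Set.mem_union, Set.mem_setOf_eq, not_or, not_le] at hcon
      obtain ⟨hc1, hc2⟩ := hcon
      linarith
    have hsum : Tendsto (fun (n : ℕ) =>
        B.μ {ω | δ / 2 ≤ dist (Real.sqrt (n : ℝ) * B.W n ω) (c * Zinf ω)}
        + B.μ {ω | δ / 2 ≤ dist (c * B.Z n ω) (c * Zinf ω)}) atTop (𝓝 0) := by
      have := Tendsto.add h1 h2
      simpa using this
    exact tendsto_of_tendsto_of_tendsto_of_le_of_le tendsto_const_nhds hsum
      (fun n => zero_le) hle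
  exact slutsky B.μ μ' X A Y hXmeas hAmeas hYmeas hconv hdist
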